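/- For every real α > 0 and positive integer n: (a) n^α / ∑_{i=1}^n i^α ≤ (α+1)/n; (b) if α = α(n) satisfies α/n → c for a constant c ∈ (0,∞), then n^α / ∑_{i=1}^n i^α → 1 − e^{−c} as n → ∞. -/

import Mathlib

open Filter

lemma sum_rpow_lb (n : ℕ) (α : ℝ) (hα : 0 < α) :
    (n : ℝ) ^ (α + 1) / (α + 1) ≤ ∑ i ∈ Finset.Icc 1 n, (i : ℝ) ^ α := by
  have hmono : MonotoneOn (fun x : ℝ => x ^ α) (Set.Icc (0:ℝ) (0 + n)) := by
    intro x hx y _ hxy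
    exact Real.rpow_le_rpow hx.1 hxy hα.le
  have h := hmono.integral_le_sum
  have hint : ∫ x in (0:ℝ)..(0+(n:ℝ)), x ^ α = ((0+(n:ℝ)) ^ (α + 1) - 0 ^ (α+1)) / (α + 1) := by
    open intervalIntegral in exact integral_rpow (Or.inl (by linarith))
  rw [hint] at h
  rw [zero_add, Real.zero_rpow (by linarith), sub_zero] at h
  refine h.trans_eq ?_
  rw [← Finset.Ico_add_one_right_eq_Icc, Finset.sum_Ico_eq_sum_range]
  simp only [Nat.add_sub_cancel, Nat.succ_sub_one]
  refine Finset.sum_congr rfl fun i _ => ?_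
  push_cast
  ring_nf

lemma eq_inv_sum (n : ℕ) (hn : 1 ≤ n) (α : ℝ) :
    (n : ℝ) ^ α / ∑ i ∈ Finset.Icc 1 n, (i : ℝ) ^ α
      = (∑ j ∈ Finset.range n, (1 - (j : ℝ) / n) ^ α)⁻¹ := by
  have hn' : (0:ℝ) < n := by exact_mod_cast hn
  have h1 : ∑ j ∈ Finset.range n, (1 - (j : ℝ) / n) ^ α
      = ∑ i ∈ Finset.Icc 1 n, ((i : ℝ) / n) ^ α := by
    rw [← Finset.Ico_add_one_right_eq_Icc, Finset.sum_Ico_eq_sum_range]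
    simp only [Nat.add_sub_cancel, Nat.succ_sub_one]
    rw [← Finset.sum_range_reflect]
    refine Finset.sum_congr rfl fun j hj => ?_
    rw [Finset.mem_range] at hj
    congr 1
    have h2 : ((n - 1 - j : ℕ) : ℝ) = (n : ℝ) - 1 - j := by
      have : j ≤ n - 1 := Nat.le_sub_one_of_lt hj
      push_cast [Nat.sub_sub, Nat.cast_sub (by omega : 1 + j ≤ n)]
      ring
    rw [h2]
    field_simp
    push_cast
    ring
  have h3 : ∑ i ∈ Finset.Icc 1 n, ((i : ℝ) / n) ^ α
      = (∑ i ∈ Finset.Icc 1 n, (i : ℝ) ^ α) / (n : ℝ) ^ α := by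
    rw [Finset.sum_div]
    refine Finset.sum_congr rfl fun i _ => ?_
    rw [Real.div_rpow (Nat.cast_nonneg i) (Nat.cast_nonneg n)]
  rw [h1, h3, inv_div]

theorem stmt13 (αseq : ℕ → ℝ) (hαseq : ∀ n, 0 < αseq n) (c : ℝ) (hc : 0 < c)
    (hlim : Tendsto (fun n : ℕ => αseq n / (n : ℝ)) atTop (nhds c)) :
    (∀ n : ℕ, 1 ≤ n → ∀ α : ℝ, 0 < α →
      (n : ℝ) ^ α / ∑ i ∈ Finset.Icc 1 n, (i : ℝ) ^ α ≤ (α + 1) / (n : ℝ)) ∧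
    Tendsto (fun n : ℕ => (n : ℝ) ^ (αseq n) / ∑ i ∈ Finset.Icc 1 n, (i : ℝ) ^ (αseq n))
      atTop (nhds (1 - Real.exp (-c))) := by
  constructor
  · intro n hn α hα
    have hn' : (0:ℝ) < n := by exact_mod_cast hn
    have hlb := sum_rpow_lb n α hα
    have hS : 0 < ∑ i ∈ Finset.Icc 1 n, (i : ℝ) ^ α :=
      lt_of_lt_of_le (by positivity) hlb
    rw [div_le_div_iff₀ hS hn']
    have key : (n : ℝ) ^ α * n = (n : ℝ) ^ (α + 1) := by
      rw [Real.rpow_add hn', Real.rpow_one]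
    calc (n : ℝ) ^ α * n = (n : ℝ) ^ (α + 1) := key
      _ = (α + 1) * ((n : ℝ) ^ (α + 1) / (α + 1)) := by
          rw [mul_div_cancel₀ _ (by linarith)]
      _ ≤ (α + 1) * ∑ i ∈ Finset.Icc 1 n, (i : ℝ) ^ α := by
          exact mul_le_mul_of_nonneg_left hlb (by linarith)
  · -- part (b)
    set F : ℕ → ℕ → ℝ := fun n j => if j < n then (1 - (j : ℝ) / n) ^ (αseq n) else 0 with hF
    have hexp : Real.exp (-c) < 1 := Real.exp_lt_one_iff.mpr (by linarith)
    have hexp0 : (0:ℝ) ≤ Real.exp (-c) := (Real.exp_pos _).le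
    -- pointwise limit
    have hpt : ∀ j : ℕ, Tendsto (fun n => F n j) atTop (nhds (Real.exp (-c) ^ j)) := by
      intro j
      have hlog : Tendsto (fun n : ℕ => (αseq n / n) * ((n : ℝ) * Real.log (1 + (-(j:ℝ)) / n)))
          atTop (nhds (c * (-(j:ℝ)))) :=
        hlim.mul ((Real.tendsto_mul_log_one_add_div_atTop (-(j:ℝ))).comp
          tendsto_natCast_atTop_atTop)
      have hexp' : Tendsto (fun n : ℕ => Real.exp ((αseq n / n) * ((n : ℝ) * Real.log (1 + (-(j:ℝ)) / n))))
          atTop (nhds (Real.exp (c * (-(j:ℝ))))) := (Real.continuous_exp.tendsto _).comp hlog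
      have heq : Real.exp (c * (-(j:ℝ))) = Real.exp (-c) ^ j := by
        rw [← Real.exp_nat_mul]; ring_nf
      rw [heq] at hexp'
      refine hexp'.congr' ?_
      filter_upwards [eventually_ge_atTop (j + 1)] with n hn
      have hn0 : (0:ℝ) < n := Nat.cast_pos.mpr (by omega)
      have hjn : (j:ℝ) < n := by exact_mod_cast hn
      have hpos : 0 < 1 - (j:ℝ) / n := by
        rw [sub_pos, div_lt_one hn0]; exact hjn
      have : 1 + (-(j:ℝ)) / (n:ℝ) = 1 - (j:ℝ)/n := by ring
      rw [this]
      rw [hF]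
      simp only [if_pos (by omega : j < n)]
      rw [Real.rpow_def_of_pos hpos]
      congr 1
      field_simp
    -- domination
    have hbd : ∀ᶠ n in atTop, ∀ j : ℕ, ‖F n j‖ ≤ Real.exp (-(c/2)) ^ j := by
      have hev : ∀ᶠ n in atTop, c/2 ≤ αseq n / n :=
        hlim.eventually (eventually_ge_nhds (by linarith))
      filter_upwards [hev, eventually_ge_atTop 1] with n hn hn1
      intro j
      by_cases hj : j < n
      · have hn0 : (0:ℝ) < n := Nat.cast_pos.mpr (by omega)
        have hjn : (j:ℝ) < n := by exact_mod_cast hj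
        have hpos : 0 ≤ 1 - (j:ℝ) / n := by
          rw [sub_nonneg, div_le_one hn0]; exact hjn.le
        have hFj : F n j = (1 - (j:ℝ)/n) ^ (αseq n) := by rw [hF]; simp [hj]
        rw [hFj, Real.norm_eq_abs, abs_of_nonneg (Real.rpow_nonneg hpos _)]
        have h1 : (1 - (j:ℝ)/n) ≤ Real.exp (-((j:ℝ)/n)) := by
          have := Real.add_one_le_exp (-((j:ℝ)/n)); linarith
        calc (1 - (j:ℝ)/n) ^ (αseq n) ≤ (Real.exp (-((j:ℝ)/n))) ^ (αseq n) :=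
              Real.rpow_le_rpow hpos h1 (hαseq n).le
          _ = Real.exp (-((j:ℝ)/n) * αseq n) := by rw [← Real.exp_mul]
          _ ≤ Real.exp ((j:ℝ) * (-(c/2))) := by
              apply Real.exp_le_exp.mpr
              have : -((j:ℝ)/n) * αseq n = -((j:ℝ) * (αseq n / n)) := by
                field_simp
              rw [this]
              have hj0 : (0:ℝ) ≤ j := Nat.cast_nonneg j
              nlinarith
          _ = Real.exp (-(c/2)) ^ j := by rw [← Real.exp_nat_mul]
      · have : F n j = 0 := by rw [hF]; simp [hj]
        rw [this]
        simp [Real.exp_pos, pow_nonneg (Real.exp_pos _).le]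
    have hsumb : Summable (fun j : ℕ => Real.exp (-(c/2)) ^ j) :=
      summable_geometric_of_lt_one (Real.exp_pos _).le
        (Real.exp_lt_one_iff.mpr (by linarith))
    have htsum : Tendsto (fun n => ∑' j, F n j) atTop
        (nhds (∑' j : ℕ, Real.exp (-c) ^ j)) :=
      tendsto_tsum_of_dominated_convergence hsumb hpt hbd
    rw [tsum_geometric_of_lt_one hexp0 hexp] at htsum
    have hlim2 : Tendsto (fun n => (∑' j, F n j)⁻¹) atTop (nhds ((1 - Real.exp (-c))⁻¹)⁻¹) :=
      htsum.inv₀ (inv_ne_zero (by linarith))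
    rw [inv_inv] at hlim2
    refine hlim2.congr' ?_
    filter_upwards [eventually_ge_atTop 1] with n hn
    rw [eq_inv_sum n hn (αseq n)]
    congr 1
    rw [tsum_eq_sum (s := Finset.range n) (fun j hj => by
      rw [hF]; simp [Finset.mem_range.not.mp hj, Nat.not_lt.mp (Finset.mem_range.not.mp hj)])]
    refine Finset.sum_congr rfl fun j hj => ?_
    rw [hF]; simp [Finset.mem_range.mp hj]
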